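/- Let V be an infinite set, C ⊆ P(V), I a nonempty countable set, and ρ < |V| a cardinal. Suppose S_i ⊆ C for each i ∈ I and: (1) for every i ∈ I, the union of every ⊆-chain of sets from S_i belongs to C; (2) for every cardinal θ with ρ ≤ θ < |V| there exists i ∈ I such that for every A ⊆ V with |A| = θ there is D ∈ S_i with A ⊆ D ⊆ V and |D| = θ. Then V is C-filtrable. -/

import Mathlib

open Cardinal

/-- `⟨f β : β < κ.ord⟩` is a filtration of the type `α`: an increasing continuous
sequence of subsets of cardinality `< #α` whose union is all of `α`. -/
def IsCardFiltration {α : Type} (κ : Cardinal.{0}) (f : Ordinal.{0} → Set α) : Prop :=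
  (∀ β < κ.ord, #(f β) < #α) ∧
  (∀ β γ : Ordinal, β < γ → γ < κ.ord → f β ⊆ f γ) ∧
  (∀ β < κ.ord, Order.IsSuccLimit β → f β = ⋃ γ ∈ Set.Iio β, f γ) ∧
  (⋃ β ∈ Set.Iio κ.ord, f β) = Set.univ

namespace FiltAux

variable {α : Type}

open Classical in
/-- Pick some `D` satisfying `Q` that contains `B` and is small, if one exists. -/
noncomputable def pickStep (Q : Set α → Prop) (B : Set α) : Set α :=
  if h : ∃ D, Q D ∧ B ⊆ D ∧ #D < #α then h.choose else ∅

theorem pickStep_spec {Q : Set α → Prop} {B : Set α}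
    (h : ∃ D, Q D ∧ B ⊆ D ∧ #D < #α) :
    Q (pickStep Q B) ∧ B ⊆ pickStep Q B ∧ #(pickStep Q B) < #α := by
  rw [pickStep, dif_pos h]
  exact h.choose_spec

/-- The recursively constructed filtration. -/
noncomputable def filtSeq (Q : Set α → Prop) (F : Ordinal.{0} → Set α) (ξ : Ordinal.{0}) :
    Set α :=
  Ordinal.limitRecOn ξ ∅ (fun γ D => pickStep Q (D ∪ F γ))
    (fun ξ _ ih => ⋃ (γ : Ordinal) (h : γ < ξ), ih γ h)

theorem filtSeq_zero (Q : Set α → Prop) (F : Ordinal.{0} → Set α) :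
    filtSeq Q F 0 = ∅ := by
  rw [filtSeq, Ordinal.limitRecOn_zero]

theorem filtSeq_succ (Q : Set α → Prop) (F : Ordinal.{0} → Set α) (γ : Ordinal) :
    filtSeq Q F (Order.succ γ) = pickStep Q (filtSeq Q F γ ∪ F γ) := by
  rw [filtSeq, Ordinal.limitRecOn_succ]
  rfl

theorem filtSeq_limit (Q : Set α → Prop) (F : Ordinal.{0} → Set α) {ξ : Ordinal}
    (h : Order.IsSuccLimit ξ) :
    filtSeq Q F ξ = ⋃ γ ∈ Set.Iio ξ, filtSeq Q F γ := by
  rw [filtSeq, Ordinal.limitRecOn_limit _ _ _ _ h]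
  rfl

noncomputable def ordIdx (o : Ordinal.{0}) (i : o.ToType) : Ordinal.{0} :=
  @Ordinal.typein o.ToType (· < ·) isWellOrder_lt i

theorem ordIdx_lt (o : Ordinal.{0}) (i : o.ToType) : ordIdx o i < o :=
  Ordinal.typein_lt_self i

theorem ordIdx_surj (o : Ordinal.{0}) {γ : Ordinal.{0}} (h : γ < o) : ∃ i, ordIdx o i = γ := by
  have := @Ordinal.typein_surj o.ToType (· < ·) isWellOrder_lt γ
    (by rw [Ordinal.type_toType]; exact h)
  exact this

theorem key [Infinite α] (C : Set (Set α)) (Q : Set α → Prop) (F : Ordinal.{0} → Set α)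
    (hQC : ∀ D, Q D → D ∈ C)
    (hempty : (∅ : Set α) ∈ C)
    (hF : ∀ β, #(F β) < #α)
    (hFcov : ∀ x : α, ∃ β < ((#α).ord.cof).ord, x ∈ F β)
    (hstep : ∀ B : Set α, #B < #α → ∃ D, Q D ∧ B ⊆ D ∧ #D < #α)
    (hlim : ∀ ξ : Ordinal.{0}, Order.IsSuccLimit ξ → ξ < ((#α).ord.cof).ord →
      ∀ T ⊆ setOf Q, IsChain (· ⊆ ·) T → ⋃₀ T ∈ C) :
    ∃ (κ : Cardinal.{0}) (f : Ordinal.{0} → Set α),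
      (∀ β < Cardinal.ord κ, f β ∈ C) ∧ IsCardFiltration κ f := by
  set κ : Cardinal.{0} := (#α).ord.cof with hκdef
  set f : Ordinal.{0} → Set α := filtSeq Q F with hfdef
  have hκω : ℵ₀ ≤ κ := Ordinal.aleph0_le_cof.2 (Cardinal.isSuccLimit_ord (Cardinal.aleph0_le_mk α))
  have hordlim : Order.IsSuccLimit κ.ord := Cardinal.isSuccLimit_ord hκω
  -- existence of step whenever current set is small
  have hex : ∀ (γ : Ordinal) (D : Set α), #D < #α →
      ∃ D', Q D' ∧ D ∪ F γ ⊆ D' ∧ #D' < #α := by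
    intro γ D hD
    exact hstep _ ((mk_union_le _ _).trans_lt
      (Cardinal.add_lt_of_lt (Cardinal.aleph0_le_mk α) hD (hF γ)))
  have main : ∀ ξ : Ordinal.{0}, ξ < κ.ord →
      (∀ δ < ξ, f δ ⊆ f ξ) ∧ #(f ξ) < #α ∧ f ξ ∈ C ∧
        (∀ γ, ξ = Order.succ γ → Q (f ξ)) := by
    intro ξ
    induction ξ using Ordinal.limitRecOn with
    | zero =>
      intro _
      rw [hfdef, filtSeq_zero]
      refine ⟨fun δ hδ => absurd hδ (not_lt_zero (a := δ)), ?_, hempty, ?_⟩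
      · simpa using Cardinal.aleph0_pos.trans_le (Cardinal.aleph0_le_mk α)
      · intro γ h
        exact absurd (h ▸ Order.lt_succ γ) (not_lt_zero (a := γ))
    | add_one γ IH =>
      rw [Ordinal.add_one_eq_succ]
      intro hlt
      have hγlt : γ < κ.ord := (Order.lt_succ γ).trans hlt
      obtain ⟨mono, hsz, _, _⟩ := IH hγlt
      have hexx := hex γ (f γ) hsz
      have hspec := pickStep_spec hexx
      have heq : f (Order.succ γ) = pickStep Q (f γ ∪ F γ) := filtSeq_succ Q F γ
      rw [heq]
      refine ⟨?_, hspec.2.2, hQC _ hspec.1, fun _ _ => hspec.1⟩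
      intro δ hδ
      rcases (Order.lt_succ_iff.1 hδ).lt_or_eq with h | h
      · exact (mono δ h).trans ((Set.subset_union_left).trans hspec.2.1)
      · rw [h]; exact (Set.subset_union_left).trans hspec.2.1
    | limit ξ hξ IH =>
      intro hlt
      have heq : f ξ = ⋃ γ ∈ Set.Iio ξ, f γ := filtSeq_limit Q F hξ
      have hmono : ∀ δ < ξ, f δ ⊆ f ξ := by
        intro δ hδ
        rw [heq]
        exact Set.subset_biUnion_of_mem hδ
      -- reindex by ξ.ToType
      have htype : (⋃ γ ∈ Set.Iio ξ, f γ) = ⋃ i : ξ.ToType, f (ordIdx ξ i) := by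
        ext x
        simp only [Set.mem_iUnion, Set.mem_Iio]
        constructor
        · rintro ⟨γ, hγ, hx⟩
          obtain ⟨i, rfl⟩ := ordIdx_surj ξ hγ
          exact ⟨i, hx⟩
        · rintro ⟨i, hx⟩
          exact ⟨_, ordIdx_lt ξ i, hx⟩
      have hcard : #ξ.ToType < κ := by
        rw [Cardinal.mk_toType]
        exact Cardinal.lt_ord.1 hlt
      have hsz : #(f ξ) < #α := by
        rw [heq, htype]
        refine (Cardinal.mk_iUnion_le _).trans_lt
          (Cardinal.mul_lt_of_lt (Cardinal.aleph0_le_mk α)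
            (hcard.trans_le (Ordinal.cof_ord_le _)) ?_)
        refine Ordinal.iSup_lt (by rwa [← hκdef]) ?_
        intro i
        have hi : ordIdx ξ i < ξ := ordIdx_lt ξ i
        exact (IH _ hi (hi.trans hlt)).2.1
      refine ⟨hmono, hsz, ?_, ?_⟩
      · -- membership in C via chains
        have hTeq : f ξ = ⋃₀ {D | ∃ γ, Order.succ γ < ξ ∧ D = f (Order.succ γ)} := by
          apply Set.Subset.antisymm
          · rw [heq]
            intro x hx
            simp only [Set.mem_iUnion, Set.mem_Iio] at hx
            obtain ⟨γ, hγ, hx⟩ := hx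
            have hsγ : Order.succ γ < ξ := hξ.succ_lt hγ
            have hsub : f γ ⊆ f (Order.succ γ) :=
              (IH _ hsγ (hsγ.trans hlt)).1 γ (Order.lt_succ γ)
            exact ⟨f (Order.succ γ), ⟨γ, hsγ, rfl⟩, hsub hx⟩
          · intro x hx
            obtain ⟨D, ⟨γ, hγ, rfl⟩, hx⟩ := hx
            exact hmono _ hγ hx
        rw [hTeq]
        refine hlim ξ hξ hlt _ ?_ ?_
        · rintro D ⟨γ, hγ, rfl⟩
          exact (IH _ hγ (hγ.trans hlt)).2.2.2 γ rfl
        · rintro D1 ⟨γ1, hγ1, rfl⟩ D2 ⟨γ2, hγ2, rfl⟩ _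
          rcases lt_trichotomy (Order.succ γ1) (Order.succ γ2) with h | h | h
          · exact Or.inl ((IH _ hγ2 (hγ2.trans hlt)).1 _ h)
          · exact Or.inl (h ▸ Set.Subset.refl _)
          · exact Or.inr ((IH _ hγ1 (hγ1.trans hlt)).1 _ h)
      · intro γ hγeq
        subst hγeq
        exact absurd (hξ.succ_lt (Order.lt_succ γ)) (lt_irrefl _)
  refine ⟨κ, f, fun β hβ => (main β hβ).2.2.1, fun β hβ => (main β hβ).2.1,
    fun β γ hβγ hγ => (main γ hγ).1 β hβγ, fun β _ hβ => filtSeq_limit Q F hβ, ?_⟩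
  apply Set.eq_univ_of_forall
  intro x
  obtain ⟨β, hβ, hx⟩ := hFcov x
  have hsucc : Order.succ β < κ.ord := hordlim.succ_lt hβ
  have hβsz : #(f β) < #α := (main β hβ).2.1
  have hspec := pickStep_spec (hex β (f β) hβsz)
  have : x ∈ f (Order.succ β) := by
    rw [hfdef, filtSeq_succ]
    exact hspec.2.1 (Set.mem_union_right _ hx)
  simp only [Set.mem_iUnion, Set.mem_Iio]
  exact ⟨Order.succ β, hsucc, this⟩

end FiltAux

theorem filtrable_of_chains {α : Type} [Infinite α] (C : Set (Set α))
    (I : Type) [Countable I] [Nonempty I] (S : I → Set (Set α))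
    (hS : ∀ i, S i ⊆ C) (ρ : Cardinal.{0}) (hρ : ρ < #α)
    (hchain : ∀ i, ∀ T ⊆ S i, IsChain (· ⊆ ·) T → ⋃₀ T ∈ C)
    (hcover : ∀ θ : Cardinal.{0}, ρ ≤ θ → θ < #α → ∃ i, ∀ A : Set α, #A = θ →
      ∃ D ∈ S i, A ⊆ D ∧ #D = θ) :
    ∃ (κ : Cardinal.{0}) (f : Ordinal.{0} → Set α),
      (∀ β < κ.ord, f β ∈ C) ∧ IsCardFiltration κ f := by
  classical
  have hκω : ℵ₀ ≤ (#α).ord.cof :=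
    Ordinal.aleph0_le_cof.2 (Cardinal.isSuccLimit_ord (Cardinal.aleph0_le_mk α))
  have hempty : (∅ : Set α) ∈ C := by
    have := hchain (Classical.arbitrary I) ∅ (Set.empty_subset _) IsChain.empty
    rwa [Set.sUnion_empty] at this
  -- the raw cofinal covering family `F`
  obtain ⟨U, hU, hUcard⟩ :=
    Order.cof_eq (#α).ord.ToType
  rw [Ordinal.cof_toType] at hUcard
  have e : (#α).ord.ToType ≃ α := Classical.choice (Cardinal.eq.1 (Cardinal.mk_ord_toType #α))
  have eS : ((#α).ord.cof).ord.ToType ≃ U := by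
    refine Classical.choice (Cardinal.eq.1 ?_)
    rw [Cardinal.mk_toType, Cardinal.card_ord, hUcard]
  set enumIso := Ordinal.ToType.mk (o := ((#α).ord.cof).ord) with henum
  set F : Ordinal.{0} → Set α := fun β =>
    if h : β < ((#α).ord.cof).ord then
      {x | e.symm x ≤ ((eS (enumIso ⟨β, h⟩) : U) : (#α).ord.ToType)} else ∅ with hFdef
  have hF : ∀ β, #(F β) < #α := by
    intro β
    simp only [hFdef]
    by_cases h : β < ((#α).ord.cof).ord
    · rw [dif_pos h]
      set s : (#α).ord.ToType := ((eS (enumIso ⟨β, h⟩) : U) : (#α).ord.ToType)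
      have h1 : {x | e.symm x ≤ s} = e.symm ⁻¹' Set.Iic s := rfl
      rw [h1]
      refine (Cardinal.mk_preimage_of_injective _ _ e.symm.injective).trans_lt ?_
      rw [← Set.Iio_insert]
      refine (Cardinal.mk_insert_le).trans_lt ?_
      exact Cardinal.add_lt_of_lt (Cardinal.aleph0_le_mk α)
        (Cardinal.mk_Iio_ord_toType s)
        (Cardinal.one_lt_aleph0.trans_le (Cardinal.aleph0_le_mk α))
    · rw [dif_neg h]
      simpa using Cardinal.aleph0_pos.trans_le (Cardinal.aleph0_le_mk α)
  have hFcov : ∀ x : α, ∃ β < ((#α).ord.cof).ord, x ∈ F β := by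
    intro x
    obtain ⟨s, hs, hns⟩ := hU (e.symm x)
    set b : Set.Iio ((#α).ord.cof).ord := enumIso.symm (eS.symm ⟨s, hs⟩) with hb
    refine ⟨b.1, b.2, ?_⟩
    simp only [hFdef]
    have hb2 : (b : Ordinal) < ((#α).ord.cof).ord := b.2
    rw [dif_pos hb2]
    show e.symm x ≤ ((eS (enumIso ⟨b.1, hb2⟩) : U) : (#α).ord.ToType)
    have hbb : (⟨b.1, hb2⟩ : Set.Iio ((#α).ord.cof).ord) = b := rfl
    rw [hbb, hb, OrderIso.apply_symm_apply, Equiv.apply_symm_apply]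
    exact hns
  rcases lt_or_ge ℵ₀ ((#α).ord.cof) with hκgt | hκle
  · -- uncountable cofinality: a single index works cofinally often
    have hαbig : ℵ₀ < #α := hκgt.trans_le (Ordinal.cof_ord_le _)
    obtain ⟨i, hi⟩ : ∃ i, ∀ ν, ν < #α → ∃ θ, ν ≤ θ ∧ θ < #α ∧
        ∀ A : Set α, #A = θ → ∃ D ∈ S i, A ⊆ D ∧ #D = θ := by
      by_contra hcon
      push_neg at hcon
      choose ν hν hbad using hcon
      have hsup : (⨆ j, ν j) < #α :=
        Ordinal.iSup_lt (lt_of_le_of_lt Cardinal.mk_le_aleph0 hκgt) hν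
      have hθ0lt : ((⨆ j, ν j) ⊔ ρ) < #α := max_lt hsup hρ
      obtain ⟨i, hi⟩ := hcover _ (le_max_right _ _) hθ0lt
      obtain ⟨A, hA, hbadA⟩ := hbad i _
        ((le_ciSup (Cardinal.bddAbove_range _) i).trans (le_max_left _ _)) hθ0lt
      obtain ⟨D, hD, hAD, hDθ⟩ := hi A hA
      exact hbadA D hD hAD hDθ
    refine FiltAux.key C (· ∈ S i) F (fun D hD => hS i hD) hempty hF hFcov ?_ ?_
    · intro B hB
      have hν : ((#B ⊔ ρ) ⊔ ℵ₀) < #α := max_lt (max_lt hB hρ) hαbig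
      obtain ⟨θ, hνθ, hθα, hprop⟩ := hi _ hν
      have hθinf : ℵ₀ ≤ θ := le_trans (le_max_right _ _) hνθ
      obtain ⟨P, hP⟩ := Cardinal.le_mk_iff_exists_set.1 hθα.le
      have hBP : #(B ∪ P : Set α) = θ := by
        apply le_antisymm
        · refine (Cardinal.mk_union_le _ _).trans ?_
          rw [hP]
          have hBθ : #B ≤ θ :=
            le_trans (le_trans (le_max_left _ _) (le_max_left _ _)) hνθ
          calc #B + θ ≤ θ + θ := by exact add_le_add_left hBθ θ
          _ = θ := Cardinal.add_eq_self hθinf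
        · rw [← hP]
          exact Cardinal.mk_le_mk_of_subset Set.subset_union_right
      obtain ⟨D, hD, hsub, hDθ⟩ := hprop _ hBP
      exact ⟨D, hD, Set.subset_union_left.trans hsub, hDθ ▸ hθα⟩
    · intro ξ _ _ T hT hch
      exact hchain i T hT hch
  · -- countable cofinality: no limit stages below `ω`
    have hκeq : (#α).ord.cof = ℵ₀ := le_antisymm hκle hκω
    refine FiltAux.key C (fun D => ∃ i, D ∈ S i) F ?_ hempty hF hFcov ?_ ?_
    · rintro D ⟨i, hD⟩
      exact hS i hD
    · intro B hB
      obtain ⟨P, hP⟩ := Cardinal.le_mk_iff_exists_set.1 hρ.le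
      have h1 : ρ ≤ #(B ∪ P : Set α) := by
        rw [← hP]
        exact Cardinal.mk_le_mk_of_subset Set.subset_union_right
      have h2 : #(B ∪ P : Set α) < #α := by
        refine (Cardinal.mk_union_le _ _).trans_lt
          (Cardinal.add_lt_of_lt (Cardinal.aleph0_le_mk α) hB ?_)
        rw [hP]; exact hρ
      obtain ⟨i, hi2⟩ := hcover _ h1 h2
      obtain ⟨D, hD, hsub, hDc⟩ := hi2 _ rfl
      exact ⟨D, ⟨i, hD⟩, Set.subset_union_left.trans hsub, hDc ▸ h2⟩
    · intro ξ hξ hlt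
      rw [hκeq, Cardinal.ord_aleph0] at hlt
      exact absurd hlt (not_lt.2 (Ordinal.omega0_le_of_isSuccLimit hξ))
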